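/- Let d ≥ 1 and work in ℝ^d with a measurable intensity Λ : ℝ^d → [0,∞) satisfying 0 < C := ∫_{ℝ^d} Λ < ∞; write M(ρ) = ∫_{closedBall(s₀,ρ)} Λ for s₀ ∈ ℝ^d, ρ ≥ 0. On a probability space (Ω, P), let N : Ω → ℕ have the Poisson law with mean C and let (x_i)_{i∈ℕ} be random points of ℝ^d, i.i.d. with the probability law having density Λ/C with respect to Lebesgue measure, with N and all the x_i mutually independent. Let (ε_i)_{i∈ℕ} be random vectors in ℝ^d (with no independence assumption) satisfying ‖ε_i(ω)‖ ≤ m for every i and P-almost every ω, for some constant m ≥ 0, and set y_i = x_i + ε_i. Then for every r ≥ 0 and integer k ≥ 1, P( #{ i < N : y_i ∈ closedBall(s₀, r) } ≥ k ) ≤ 1 − ∑_{j=0}^{k−1} exp(−M(r+m)) · M(r+m)^j / j!. -/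

import Mathlib

open MeasureTheory ProbabilityTheory Metric
open scoped Nat

/-- Index family for the mutually independent collection consisting of the total
count `N` (index `none`) and the point locations `x i` (index `some i`). -/
def BddErr.famType (E : Type) : Option ℕ → Type
  | none => ℕ
  | some _ => E

instance BddErr.famType.instMeasurableSpace (E : Type) [MeasurableSpace E] :
    ∀ o, MeasurableSpace (BddErr.famType E o)
  | none => inferInstanceAs (MeasurableSpace ℕ)
  | some _ => inferInstanceAs (MeasurableSpace E)

/-- The combined family of random variables: the count `N` and the locations `x i`. -/
def BddErr.famFun {Ω E : Type} (N : Ω → ℕ) (x : ℕ → Ω → E) : ∀ o, Ω → BddErr.famType E o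
  | none => N
  | some i => x i

lemma BddErr.tsum_thin (C p : ℝ) (j : ℕ) :
    Summable (fun n : ℕ => Real.exp (-C) * C ^ n / n ! *
      ((n.choose j : ℝ) * (p ^ j * (1 - p) ^ (n - j)))) ∧
    (∑' n : ℕ, Real.exp (-C) * C ^ n / n ! *
      ((n.choose j : ℝ) * (p ^ j * (1 - p) ^ (n - j)))) =
      Real.exp (-(C * p)) * (C * p) ^ j / j ! := by
  set a : ℕ → ℝ := fun n => Real.exp (-C) * C ^ n / n ! *
      ((n.choose j : ℝ) * (p ^ j * (1 - p) ^ (n - j))) with ha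
  set K : ℝ := Real.exp (-C) * (C * p) ^ j / j ! with hK
  have hshift : ∀ t : ℕ, a (t + j) = K * ((C * (1 - p)) ^ t / t !) := by
    intro t
    have hjf : ((j ! : ℕ) : ℝ) ≠ 0 := Nat.cast_ne_zero.2 j.factorial_ne_zero
    have htf : ((t ! : ℕ) : ℝ) ≠ 0 := Nat.cast_ne_zero.2 t.factorial_ne_zero
    have htjf : (((t + j)! : ℕ) : ℝ) ≠ 0 := Nat.cast_ne_zero.2 (t + j).factorial_ne_zero
    have hch : (((t + j).choose j : ℕ) : ℝ) * (j ! : ℝ) * (t ! : ℝ) = ((t + j)! : ℝ) := by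
      have := Nat.choose_mul_factorial_mul_factorial (Nat.le_add_left j t)
      rw [Nat.add_sub_cancel] at this
      exact_mod_cast this
    have hsub : t + j - j = t := by omega
    simp only [ha, hK, hsub]
    rw [pow_add, mul_pow, mul_pow]
    field_simp
    linear_combination (C ^ t * C ^ j * p ^ j * (1 - p) ^ t) * hch
  have hsummb : Summable (fun t : ℕ => a (t + j)) := by
    rw [funext hshift]
    exact (Real.summable_pow_div_factorial _).mul_left K
  have hsum : Summable a := (summable_nat_add_iff j).1 hsummb
  refine ⟨hsum, ?_⟩
  have h0 : ∀ i ∈ Finset.range j, a i = 0 := by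
    intro i hi
    simp [ha, Nat.choose_eq_zero_of_lt (Finset.mem_range.1 hi)]
  have hsplit := Summable.sum_add_tsum_nat_add j hsum
  rw [← hsplit, Finset.sum_eq_zero h0, zero_add]
  have hexp : ∀ x : ℝ, (∑' n : ℕ, x ^ n / n !) = Real.exp x := by
    intro x
    rw [Real.exp_eq_exp_ℝ, NormedSpace.exp_eq_tsum_div]
  calc (∑' t : ℕ, a (t + j)) = ∑' t : ℕ, K * ((C * (1 - p)) ^ t / t !) := by
        simp only [hshift]
    _ = K * Real.exp (C * (1 - p)) := by rw [tsum_mul_left, hexp]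
    _ = Real.exp (-C) * Real.exp (C * (1 - p)) * (C * p) ^ j / j ! := by
        rw [hK]; ring
    _ = Real.exp (-(C * p)) * (C * p) ^ j / j ! := by
        rw [← Real.exp_add]
        have harg : -C + C * (1 - p) = -(C * p) := by ring
        rw [harg]

open scoped Classical in
/-- **Bounded-error corollary of the main bound** (Statement 14): for the sequence
representation of a nonhomogeneous Poisson process with intensity `Λ` (Poisson count `N` with
mean `C = ∫ Λ`, i.i.d. locations with density `Λ / C`, mutually independent), if the error
vectors `ε i` satisfy `‖ε i‖ ≤ m` almost surely (no independence assumed), then the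
probability of at least `k` noisy points `y i = x i + ε i` within radius `r` of `s₀` is at
most `1 - ∑_{j<k} e^{-M(r+m)} M(r+m)^j / j!` where `M(ρ) = ∫_{B(s₀,ρ)} Λ`. -/
theorem k_contact_distance_bound_bounded_error
    {d : ℕ} (hd : 1 ≤ d)
    (Λ : EuclideanSpace ℝ (Fin d) → ℝ) (hΛmeas : Measurable Λ) (hΛpos : ∀ s, 0 ≤ Λ s)
    (hΛint : Integrable Λ volume) (hCpos : 0 < ∫ s, Λ s ∂volume)
    {Ω : Type} [MeasurableSpace Ω] (P : Measure Ω) [IsProbabilityMeasure P]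
    (N : Ω → ℕ) (hNmeas : Measurable N)
    (x : ℕ → Ω → EuclideanSpace ℝ (Fin d)) (hxmeas : ∀ i, Measurable (x i))
    -- `N` has the Poisson law with mean `C = ∫ Λ`
    (hN : ∀ n : ℕ, P {ω | N ω = n} =
      ENNReal.ofReal (Real.exp (-(∫ s, Λ s ∂volume)) * (∫ s, Λ s ∂volume) ^ n / n !))
    -- the `x i` are identically distributed with density `Λ / C` w.r.t. Lebesgue measure
    (hx : ∀ i, Measure.map (x i) P =
      volume.withDensity (fun s => ENNReal.ofReal (Λ s / ∫ t, Λ t ∂volume)))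
    -- `N` and all the `x i` are mutually independent
    (hindep : iIndepFun (m := BddErr.famType.instMeasurableSpace _) (BddErr.famFun N x) P)
    -- error vectors, almost surely bounded in norm by `m`, with no independence assumption
    (ε : ℕ → Ω → EuclideanSpace ℝ (Fin d)) (m : ℝ) (hm : 0 ≤ m)
    (hε : ∀ i, ∀ᵐ ω ∂P, ‖ε i ω‖ ≤ m)
    (s₀ : EuclideanSpace ℝ (Fin d)) (r : ℝ) (hr : 0 ≤ r) (k : ℕ) (hk : 1 ≤ k) :
    P {ω | k ≤ ((Finset.range (N ω)).filter
        fun i => x i ω + ε i ω ∈ closedBall s₀ r).card} ≤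
      ENNReal.ofReal (1 - ∑ j ∈ Finset.range k,
        Real.exp (-(∫ s in closedBall s₀ (r + m), Λ s ∂volume)) *
          (∫ s in closedBall s₀ (r + m), Λ s ∂volume) ^ j / j !) := by
  set Creal := ∫ s, Λ s ∂volume with hCreal
  set B := closedBall s₀ (r + m) with hBdef
  have hBmeas : MeasurableSet B := measurableSet_closedBall
  set Mv := ∫ s in B, Λ s ∂volume with hMv
  -- Step 0: reduction to true points in the enlarged ball
  have hred : P {ω | k ≤ ((Finset.range (N ω)).filter
        fun i => x i ω + ε i ω ∈ closedBall s₀ r).card} ≤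
      P {ω | k ≤ ((Finset.range (N ω)).filter fun i => x i ω ∈ B).card} := by
    apply measure_mono_ae
    have hae : ∀ᵐ ω ∂P, ∀ i, ‖ε i ω‖ ≤ m := ae_all_iff.2 hε
    filter_upwards [hae] with ω hω hk'
    refine le_trans hk' (Finset.card_le_card ?_)
    intro i hi
    rw [Finset.mem_filter] at hi ⊢
    refine ⟨hi.1, ?_⟩
    have h1 : dist (x i ω) s₀ ≤ dist (x i ω) (x i ω + ε i ω) + dist (x i ω + ε i ω) s₀ :=
      dist_triangle _ _ _
    have h2 : dist (x i ω) (x i ω + ε i ω) = ‖ε i ω‖ := by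
      rw [dist_eq_norm]
      have : x i ω - (x i ω + ε i ω) = -(ε i ω) := by abel
      rw [this, norm_neg]
    have h3 : dist (x i ω + ε i ω) s₀ ≤ r := mem_closedBall.1 hi.2
    rw [hBdef, mem_closedBall]
    have h4 := hω i
    linarith
  refine hred.trans (le_of_eq ?_)
  -- Basic real facts
  have hM0 : 0 ≤ Mv := setIntegral_nonneg hBmeas fun s _ => hΛpos s
  have hMC : Mv ≤ Creal :=
    setIntegral_le_integral hΛint (Filter.Eventually.of_forall hΛpos)
  set p := Mv / Creal with hpdef
  have hp0 : 0 ≤ p := div_nonneg hM0 hCpos.le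
  have hp1 : p ≤ 1 := (div_le_one hCpos).2 hMC
  have h1p : 0 ≤ 1 - p := by linarith
  have hCp : Creal * p = Mv := by
    rw [hpdef]; field_simp
  -- Step 2: marginal probabilities
  have hxB : ∀ i, P (x i ⁻¹' B) = ENNReal.ofReal p := by
    intro i
    have h1 : P (x i ⁻¹' B) = Measure.map (x i) P B :=
      (Measure.map_apply (hxmeas i) hBmeas).symm
    rw [h1, hx i, withDensity_apply _ hBmeas]
    rw [← ofReal_integral_eq_lintegral_ofReal
      ((hΛint.div_const Creal).restrict)
      (Filter.Eventually.of_forall fun s => div_nonneg (hΛpos s) hCpos.le)]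
    rw [integral_div]
  have hxBc : ∀ i, P (x i ⁻¹' Bᶜ) = ENNReal.ofReal (1 - p) := by
    intro i
    have hcc : x i ⁻¹' Bᶜ = (x i ⁻¹' B)ᶜ := rfl
    rw [hcc, prob_compl_eq_one_sub ((hxmeas i) hBmeas), hxB i,
      ENNReal.ofReal_sub 1 hp0, ENNReal.ofReal_one]
  -- Step 4: independence product
  have hprod : ∀ (n : ℕ) (T : Finset ℕ), T ⊆ Finset.range n →
      P ({ω | N ω = n} ∩ ⋂ i ∈ Finset.range n, x i ⁻¹' (if i ∈ T then B else Bᶜ)) =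
      P {ω | N ω = n} * ENNReal.ofReal p ^ T.card *
        ENNReal.ofReal (1 - p) ^ (n - T.card) := by
    intro n T hT
    set g : Option ℕ → Set Ω := fun o =>
      Option.rec {ω | N ω = n} (fun i => x i ⁻¹' (if i ∈ T then B else Bᶜ)) o with hg
    set S : Finset (Option ℕ) := insert none ((Finset.range n).image some) with hS
    have hmeasg : ∀ o ∈ S, MeasurableSet[
        ((BddErr.famType.instMeasurableSpace _) o).comap (BddErr.famFun N x o)] (g o) := by
      intro o _
      cases o with
      | none => exact ⟨{n}, measurableSet_singleton n, rfl⟩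
      | some i =>
        refine ⟨if i ∈ T then B else Bᶜ, ?_, rfl⟩
        show MeasurableSet (if i ∈ T then B else Bᶜ : Set (EuclideanSpace ℝ (Fin d)))
        by_cases hi : i ∈ T
        · rw [if_pos hi]; exact hBmeas
        · rw [if_neg hi]; exact hBmeas.compl
    have hkey := hindep.meas_biInter hmeasg
    have hnone : (none : Option ℕ) ∉ (Finset.range n).image some := by simp
    have hset : (⋂ o ∈ S, g o) =
        {ω | N ω = n} ∩ ⋂ i ∈ Finset.range n, x i ⁻¹' (if i ∈ T then B else Bᶜ) := by
      ext ω
      simp [hS, hg]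
    have hinj : ∀ a ∈ Finset.range n, ∀ b ∈ Finset.range n,
        (some a : Option ℕ) = some b → a = b := fun a _ b _ h => Option.some_injective _ h
    rw [hset] at hkey
    rw [hkey, hS, Finset.prod_insert hnone, Finset.prod_image hinj]
    have hfac : ∀ i ∈ Finset.range n,
        P (g (some i)) = (if i ∈ T then ENNReal.ofReal p else ENNReal.ofReal (1 - p)) := by
      intro i _
      by_cases hi : i ∈ T
      · simp only [hg, hi, if_true]; exact hxB i
      · simp only [hg, hi, if_false]; exact hxBc i
    rw [Finset.prod_congr rfl hfac, Finset.prod_ite, Finset.prod_const, Finset.prod_const]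
    have hfil1 : (Finset.range n).filter (fun i => i ∈ T) = T := by
      rw [Finset.filter_mem_eq_inter, Finset.inter_eq_right.2 hT]
    have hfil2 : ((Finset.range n).filter fun i => ¬ i ∈ T).card = n - T.card := by
      rw [Finset.filter_not, hfil1, Finset.card_sdiff_of_subset hT, Finset.card_range]
    rw [hfil1, hfil2, mul_assoc]
  -- the filter-identification helper
  have hfilt : ∀ (n : ℕ) (T : Finset ℕ), T ⊆ Finset.range n → ∀ ω : Ω,
      (∀ i ∈ Finset.range n, x i ω ∈ (if i ∈ T then B else Bᶜ)) →
      (Finset.range n).filter (fun i => x i ω ∈ B) = T := by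
    intro n T hT ω h
    ext i
    rw [Finset.mem_filter]
    constructor
    · rintro ⟨hi, hxB'⟩
      by_contra hiT
      have := h i hi
      rw [if_neg hiT] at this
      exact this hxB'
    · intro hiT
      refine ⟨hT hiT, ?_⟩
      have := h i (hT hiT)
      rwa [if_pos hiT] at this
  -- Step 5: binomial probabilities
  have hmeasNn : ∀ n, MeasurableSet {ω | N ω = n} :=
    fun n => hNmeas (measurableSet_singleton n)
  have hmeasCard : ∀ n j : ℕ,
      MeasurableSet {ω | ((Finset.range n).filter fun i => x i ω ∈ B).card = j} := by
    intro n j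
    have hf : Measurable fun ω => ((Finset.range n).filter fun i => x i ω ∈ B).card := by
      simp only [Finset.card_filter]
      apply Finset.measurable_sum
      intro i _
      exact Measurable.ite ((hxmeas i) hBmeas) measurable_const measurable_const
    exact hf (measurableSet_singleton j)
  have hbin : ∀ n j : ℕ,
      P ({ω | N ω = n} ∩ {ω | ((Finset.range n).filter fun i => x i ω ∈ B).card = j}) =
      P {ω | N ω = n} * ((n.choose j : ℕ) : ENNReal) *
        (ENNReal.ofReal p ^ j * ENNReal.ofReal (1 - p) ^ (n - j)) := by
    intro n j
    have hunion : {ω | N ω = n} ∩ {ω | ((Finset.range n).filter fun i => x i ω ∈ B).card = j}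
        = ⋃ T ∈ Finset.powersetCard j (Finset.range n),
            ({ω | N ω = n} ∩ ⋂ i ∈ Finset.range n, x i ⁻¹' (if i ∈ T then B else Bᶜ)) := by
      ext ω
      simp only [Set.mem_inter_iff, Set.mem_setOf_eq, Set.mem_iUnion,
        Finset.mem_powersetCard, Set.mem_iInter, Set.mem_preimage]
      constructor
      · rintro ⟨hn, hcard⟩
        refine ⟨(Finset.range n).filter fun i => x i ω ∈ B,
          ⟨Finset.filter_subset _ _, hcard⟩, hn, ?_⟩
        intro i hi
        split
        next h => exact (Finset.mem_filter.1 h).2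
        next h => exact fun hx' => h (Finset.mem_filter.2 ⟨hi, hx'⟩)
      · rintro ⟨T, ⟨hTsub, hTcard⟩, hn, hT⟩
        exact ⟨hn, by rw [hfilt n T hTsub ω hT]; exact hTcard⟩
    have hdisj : Set.PairwiseDisjoint
        ↑(Finset.powersetCard j (Finset.range n))
        (fun T : Finset ℕ =>
          {ω | N ω = n} ∩ ⋂ i ∈ Finset.range n, x i ⁻¹' (if i ∈ T then B else Bᶜ)) := by
      intro T hTm T' hTm' hne
      rw [Finset.mem_coe, Finset.mem_powersetCard] at hTm hTm'
      refine Set.disjoint_left.2 fun ω hω hω' => hne ?_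
      have h1 := hfilt n T hTm.1 ω (by
        intro i hi
        have := hω.2
        simp only [Set.mem_iInter, Set.mem_preimage] at this
        exact this i hi)
      have h2 := hfilt n T' hTm'.1 ω (by
        intro i hi
        have := hω'.2
        simp only [Set.mem_iInter, Set.mem_preimage] at this
        exact this i hi)
      rw [← h1, ← h2]
    have hmeasT : ∀ T ∈ Finset.powersetCard j (Finset.range n),
        MeasurableSet ({ω | N ω = n} ∩
          ⋂ i ∈ Finset.range n, x i ⁻¹' (if i ∈ T then B else Bᶜ)) := by
      intro T _
      refine (hmeasNn n).inter ?_
      refine MeasurableSet.iInter fun i => MeasurableSet.iInter fun _ => ?_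
      refine (hxmeas i) ?_
      split
      · exact hBmeas
      · exact hBmeas.compl
    rw [hunion, measure_biUnion_finset hdisj hmeasT]
    have hterm : ∀ T ∈ Finset.powersetCard j (Finset.range n),
        P ({ω | N ω = n} ∩ ⋂ i ∈ Finset.range n, x i ⁻¹' (if i ∈ T then B else Bᶜ)) =
        P {ω | N ω = n} * (ENNReal.ofReal p ^ j * ENNReal.ofReal (1 - p) ^ (n - j)) := by
      intro T hTm
      rw [Finset.mem_powersetCard] at hTm
      rw [hprod n T hTm.1, hTm.2, mul_assoc]
    rw [Finset.sum_congr rfl hterm, Finset.sum_const, Finset.card_powersetCard,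
      Finset.card_range, nsmul_eq_mul]
    ring
  -- Step 6: decomposition over the value of N
  have hpart : ∀ j : ℕ, {ω | ((Finset.range (N ω)).filter fun i => x i ω ∈ B).card = j} =
      ⋃ n : ℕ, ({ω | N ω = n} ∩
        {ω | ((Finset.range n).filter fun i => x i ω ∈ B).card = j}) := by
    intro j
    ext ω
    simp only [Set.mem_setOf_eq, Set.mem_iUnion, Set.mem_inter_iff]
    constructor
    · intro h
      exact ⟨N ω, rfl, h⟩
    · rintro ⟨n, hn, h⟩
      subst hn
      exact h
  have hdisjN : ∀ j : ℕ, Pairwise (Function.onFun Disjoint fun n : ℕ =>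
      {ω | N ω = n} ∩ {ω | ((Finset.range n).filter fun i => x i ω ∈ B).card = j}) := by
    intro j n n' hne
    refine Set.disjoint_left.2 fun ω hω hω' => hne ?_
    have h1 : N ω = n := hω.1
    have h2 : N ω = n' := hω'.1
    rw [← h1, ← h2]
  have hmeasSfj : ∀ j : ℕ,
      MeasurableSet {ω | ((Finset.range (N ω)).filter fun i => x i ω ∈ B).card = j} := by
    intro j
    rw [hpart j]
    exact MeasurableSet.iUnion fun n => (hmeasNn n).inter (hmeasCard n j)
  -- Step 7: the Poisson-thinning identity
  have hSfj : ∀ j : ℕ,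
      P {ω | ((Finset.range (N ω)).filter fun i => x i ω ∈ B).card = j} =
      ENNReal.ofReal (Real.exp (-Mv) * Mv ^ j / j !) := by
    intro j
    rw [hpart j, measure_iUnion (hdisjN j) (fun n => (hmeasNn n).inter (hmeasCard n j))]
    have hterm : ∀ n : ℕ, P ({ω | N ω = n} ∩
        {ω | ((Finset.range n).filter fun i => x i ω ∈ B).card = j}) =
        ENNReal.ofReal (Real.exp (-Creal) * Creal ^ n / n ! *
          ((n.choose j : ℝ) * (p ^ j * (1 - p) ^ (n - j)))) := by
      intro n
      rw [hbin n j, hN n]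
      rw [← ENNReal.ofReal_pow hp0, ← ENNReal.ofReal_pow h1p,
        ← ENNReal.ofReal_natCast (n.choose j),
        ← ENNReal.ofReal_mul (by positivity),
        ← ENNReal.ofReal_mul (by positivity),
        ← ENNReal.ofReal_mul (by positivity)]
      congr 1
      ring
    rw [tsum_congr hterm]
    have hthin := BddErr.tsum_thin Creal p j
    rw [← ENNReal.ofReal_tsum_of_nonneg (fun n => by positivity) hthin.1, hthin.2, hCp]
  -- Step 8: assemble
  have hcompl : {ω | k ≤ ((Finset.range (N ω)).filter fun i => x i ω ∈ B).card}ᶜ =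
      ⋃ j ∈ Finset.range k,
        {ω | ((Finset.range (N ω)).filter fun i => x i ω ∈ B).card = j} := by
    ext ω
    simp only [Set.mem_compl_iff, Set.mem_setOf_eq, not_le, Set.mem_iUnion,
      Finset.mem_range]
    constructor
    · intro h
      exact ⟨_, h, rfl⟩
    · rintro ⟨j, hj, h⟩
      rw [h]; exact hj
  have hmc : MeasurableSet
      {ω | k ≤ ((Finset.range (N ω)).filter fun i => x i ω ∈ B).card}ᶜ := by
    rw [hcompl]
    exact Finset.measurableSet_biUnion _ fun j _ => hmeasSfj j
  have hPcompl : P {ω | k ≤ ((Finset.range (N ω)).filter fun i => x i ω ∈ B).card}ᶜ =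
      ENNReal.ofReal (∑ j ∈ Finset.range k, Real.exp (-Mv) * Mv ^ j / j !) := by
    rw [hcompl]
    rw [measure_biUnion_finset ?_ (fun j _ => hmeasSfj j)]
    · rw [Finset.sum_congr rfl (fun j _ => hSfj j),
        ENNReal.ofReal_sum_of_nonneg (fun j _ => by positivity)]
    · intro j _ j' _ hne
      refine Set.disjoint_left.2 fun ω hω hω' => hne ?_
      rw [Set.mem_setOf_eq] at hω hω'
      rw [← hω, ← hω']
  have hfinal := prob_compl_eq_one_sub (μ := P) hmc
  rw [compl_compl, hPcompl] at hfinal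
  rw [hfinal, ENNReal.ofReal_sub 1 (by positivity), ENNReal.ofReal_one]
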